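/- arXiv:1508.07119 — 2 statements merged into one kernel-verified Lean document; each statement's English description precedes it below -/
import Mathlib

section
/- A finite simple graph G is inseparable if and only if for every vertex i, the complement of the induced subgraph of G on the neighborhood N(i) is connected. -/
open MvPolynomial

/-- The edge ideal of a graph. -/
noncomputable def edgeIdeal (K : Type*) [Field K] {V : Type*} (G : SimpleGraph V) :
    Ideal (MvPolynomial V K) :=
  Ideal.span {m | ∃ i j, G.Adj i j ∧ m = X i * X j}

/-- A vertex cover of a graph. -/
def IsVertexCover {V : Type*} (G : SimpleGraph V) (C : Set V) : Prop :=
  ∀ i j, G.Adj i j → i ∈ C ∨ j ∈ C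

/-- A minimal vertex cover. -/
def IsMinVertexCover {V : Type*} (G : SimpleGraph V) (C : Set V) : Prop :=
  IsVertexCover G C ∧ ∀ C' ⊆ C, IsVertexCover G C' → C' = C

/-- An independent set. -/
def IsIndepSet {V : Type*} (G : SimpleGraph V) (D : Set V) : Prop :=
  ∀ i ∈ D, ∀ j ∈ D, ¬ G.Adj i j

/-- The vertex cover ideal (= Alexander dual of the edge ideal). -/
noncomputable def coverIdeal (K : Type*) [Field K] {V : Type*} (G : SimpleGraph V) :
    Ideal (MvPolynomial V K) :=
  Ideal.span {m | ∃ C : Finset V, IsMinVertexCover G ↑C ∧ m = ∏ i ∈ C, X i}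

/-- The graded maximal ideal of a polynomial ring. -/
noncomputable def maxIdeal (σ K : Type*) [Field K] : Ideal (MvPolynomial σ K) :=
  Ideal.span (Set.range X)

/-- `S/I` is a Cohen-Macaulay ring: there is a regular sequence on `S/I` consisting of
elements of the graded maximal ideal whose length equals the Krull dimension of `S/I`. -/
def IsCMquot {σ K : Type*} [Field K] (I : Ideal (MvPolynomial σ K)) : Prop :=
  ∃ rs : List (MvPolynomial σ K), (∀ r ∈ rs, r ∈ maxIdeal σ K) ∧
    RingTheory.Sequence.IsRegular (MvPolynomial σ K ⧸ I) rs ∧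
    (rs.length : WithBot (WithTop ℕ)) = ringKrullDim (MvPolynomial σ K ⧸ I)

/-- A graph is Cohen-Macaulay over `K` if its edge ideal defines a CM quotient. -/
def IsCMGraph (K : Type*) [Field K] {V : Type*} (G : SimpleGraph V) : Prop :=
  IsCMquot (edgeIdeal K G)

/-- A graph is bi-Cohen-Macaulay over `K` if both the edge ideal and its Alexander dual
(the vertex cover ideal) define Cohen-Macaulay quotients. -/
def IsBiCMGraph (K : Type*) [Field K] {V : Type*} (G : SimpleGraph V) : Prop :=
  IsCMquot (edgeIdeal K G) ∧ IsCMquot (coverIdeal K G)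

/-- `I` has a `d`-linear resolution: it admits a free resolution in which the generators
are homogeneous of degree `d`, and all entries of the syzygy matrices are homogeneous of
degree `1` (in particular the resolution is minimal and all `i`-th syzygies live in
degree `i + d`). -/
def HasLinearResolution {σ K : Type*} [Field K] (I : Ideal (MvPolynomial σ K)) (d : ℕ) :
    Prop :=
  ∃ (b : ℕ → ℕ) (g : Fin (b 0) → MvPolynomial σ K)
      (M : ∀ i, Matrix (Fin (b i)) (Fin (b (i + 1))) (MvPolynomial σ K)),
    (∀ k, g k ∈ homogeneousSubmodule σ K d) ∧
    Ideal.span (Set.range g) = I ∧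
    (∀ i k l, M i k l ∈ homogeneousSubmodule σ K 1) ∧
    LinearMap.ker (Matrix.mulVecLin (Matrix.of fun (_ : Fin 1) k => g k)) =
      LinearMap.range (Matrix.mulVecLin (M 0)) ∧
    ∀ i, LinearMap.ker (Matrix.mulVecLin (M i)) =
      LinearMap.range (Matrix.mulVecLin (M (i + 1)))

/-- `b` is the sequence of (total) Betti numbers of `I`: there is a free resolution of `I`
with `i`-th free module of rank `b i` which is minimal, i.e. all entries of the syzygy
matrices lie in the graded maximal ideal. -/
def IsMinimalFreeResolution {σ K : Type*} [Field K] (I : Ideal (MvPolynomial σ K))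
    (b : ℕ → ℕ) : Prop :=
  ∃ (g : Fin (b 0) → MvPolynomial σ K)
      (M : ∀ i, Matrix (Fin (b i)) (Fin (b (i + 1))) (MvPolynomial σ K)),
    Ideal.span (Set.range g) = I ∧
    (∀ i k l, M i k l ∈ maxIdeal σ K) ∧
    LinearMap.ker (Matrix.mulVecLin (Matrix.of fun (_ : Fin 1) k => g k)) =
      LinearMap.range (Matrix.mulVecLin (M 0)) ∧
    ∀ i, LinearMap.ker (Matrix.mulVecLin (M i)) =
      LinearMap.range (Matrix.mulVecLin (M (i + 1)))

/-- The Alexander dual of a squarefree monomial ideal: it is generated by the monomials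
`∏_{i ∈ C} x_i` where `P_C = (x_i : i ∈ C)` runs through the minimal primes of `I`. -/
noncomputable def alexDual {σ K : Type*} [Field K] (I : Ideal (MvPolynomial σ K)) :
    Ideal (MvPolynomial σ K) :=
  Ideal.span {m | ∃ C : Finset σ,
    Ideal.span ((fun i => (X i : MvPolynomial σ K)) '' ↑C) ∈ I.minimalPrimes ∧
    m = ∏ i ∈ C, X i}

/-- A squarefree monomial ideal. -/
def IsSquarefreeMonomialIdeal {σ K : Type*} [Field K] (I : Ideal (MvPolynomial σ K)) :
    Prop :=
  ∃ A : Set (Finset σ), I = Ideal.span ((fun F => ∏ i ∈ F, (X i : MvPolynomial σ K)) '' A)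

/-- A monomial ideal. -/
def IsMonomialIdeal {σ K : Type*} [Field K] (I : Ideal (MvPolynomial σ K)) : Prop :=
  ∃ A : Set (σ →₀ ℕ), I = Ideal.span ((fun u => (monomial u (1 : K))) '' A)

/-- `f` divides some minimal generator of the monomial ideal `I`. -/
def DividesMinGen {σ K : Type*} [Field K] (I : Ideal (MvPolynomial σ K))
    (f : MvPolynomial σ K) : Prop :=
  ∃ u : σ →₀ ℕ, monomial u (1 : K) ∈ I ∧
    (∀ v : σ →₀ ℕ, v ≤ u → monomial v (1 : K) ∈ I → v = u) ∧
    f ∣ monomial u (1 : K)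

/-- The specialization map `S[y] → S`, `y ↦ x_i`, where `y` is the last variable. -/
noncomputable def sepMap (K : Type*) [Field K] (n : ℕ) (i : Fin n) :
    MvPolynomial (Fin (n + 1)) K →ₐ[K] MvPolynomial (Fin n) K :=
  aeval (fun j => if h : (j : ℕ) < n then X ⟨j, h⟩ else X i)

/-- `J ⊆ S[y]` is a separation of `I ⊆ S` for the variable `x_i`:  `J` is a monomial ideal
mapping onto `I` under `y ↦ x_i`, both `x_i` and `y` divide minimal generators of `J`, and
`y - x_i` is a nonzerodivisor on `S[y]/J`. -/
def IsSeparation {n : ℕ} {K : Type*} [Field K] (J : Ideal (MvPolynomial (Fin (n + 1)) K))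
    (I : Ideal (MvPolynomial (Fin n) K)) (i : Fin n) : Prop :=
  IsMonomialIdeal J ∧
  Ideal.map (sepMap K n i) J = I ∧
  DividesMinGen J (X (Fin.last n)) ∧
  DividesMinGen J (X (Fin.castSucc i)) ∧
  ∀ f, (X (Fin.last n) - X (Fin.castSucc i)) * f ∈ J → f ∈ J

/-- A squarefree monomial ideal is separable if it admits a separation. -/
def IsSeparableIdeal {n : ℕ} {K : Type*} [Field K] (I : Ideal (MvPolynomial (Fin n) K)) :
    Prop :=
  ∃ (i : Fin n) (J : Ideal (MvPolynomial (Fin (n + 1)) K)), IsSeparation J I i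


section AuxSep
open Finsupp

section
variable {n : ℕ} (i : Fin n)

def foldvar (i : Fin n) : Fin (n+1) → Fin n := fun t => if h : (t:ℕ) < n then ⟨t,h⟩ else i

@[simp] lemma foldvar_castSucc (j : Fin n) : foldvar i j.castSucc = j := by
  simp [foldvar, j.isLt, Fin.ext_iff]

@[simp] lemma foldvar_last : foldvar i (Fin.last n) = i := by
  simp [foldvar]

noncomputable def down (i : Fin n) (u : Fin (n+1) →₀ ℕ) : Fin n →₀ ℕ :=
  equivFunOnFinite.symm (fun t => u t.castSucc + if t = i then u (Fin.last n) else 0)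

lemma down_apply (u : Fin (n+1) →₀ ℕ) (t : Fin n) :
    down i u t = u t.castSucc + if t = i then u (Fin.last n) else 0 := rfl

lemma down_add (u v : Fin (n+1) →₀ ℕ) : down i (u + v) = down i u + down i v := by
  ext t; simp [down_apply]; split <;> ring

lemma down_single (a : Fin (n+1)) (b : ℕ) :
    down i (single a b) = single (foldvar i a) b := by
  ext t
  induction a using Fin.lastCases with
  | last => simp [down_apply, single_apply, (Fin.castSucc_lt_last t).ne', eq_comm]
  | cast s =>
      simp [down_apply, single_apply, Fin.castSucc_inj, (Fin.castSucc_lt_last s).ne, eq_comm]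
end


section
variable {n : ℕ} (K : Type*) [Field K] (i : Fin n)

lemma sepMap_eq_rename : sepMap K n i = (rename (foldvar i) : MvPolynomial (Fin (n+1)) K →ₐ[K] _) := by
  apply MvPolynomial.algHom_ext
  intro j
  simp only [sepMap, aeval_X, rename_X, foldvar]
  split <;> rfl

lemma down_eq_mapDomain (u : Fin (n+1) →₀ ℕ) : down i u = Finsupp.mapDomain (foldvar i) u := by
  induction u using Finsupp.induction with
  | zero => ext t; simp [down_apply]
  | single_add a b f _ _ ih =>
      rw [Finsupp.mapDomain_add, down_add, ih, Finsupp.mapDomain_single, down_single]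

lemma sepMap_monomial (u : Fin (n+1) →₀ ℕ) :
    sepMap K n i (monomial u (1:K)) = monomial (down i u) (1:K) := by
  rw [sepMap_eq_rename, rename_monomial, down_eq_mapDomain]

end

/-- total degree of an exponent vector -/
def degE {m : ℕ} (u : Fin m →₀ ℕ) : ℕ := ∑ t, u t

lemma degE_down {n : ℕ} (i : Fin n) (u : Fin (n+1) →₀ ℕ) : degE (down i u) = degE u := by
  classical
  simp only [degE, down_apply, Finset.sum_add_distrib, Finset.sum_ite_eq', Finset.mem_univ,
    if_true]
  rw [Fin.sum_univ_castSucc]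

lemma eq_of_le_of_degE_le {m : ℕ} {u v : Fin m →₀ ℕ} (h : u ≤ v) (hd : degE v ≤ degE u) :
    u = v := by
  ext t
  by_contra hne
  have h1 : ∀ s, u s ≤ v s := fun s => h s
  have : degE u < degE v := by
    apply Finset.sum_lt_sum (fun s _ => h1 s)
    exact ⟨t, Finset.mem_univ t, lt_of_le_of_ne (h1 t) hne⟩
  omega

lemma degE_add {m : ℕ} (u v : Fin m →₀ ℕ) : degE (u + v) = degE u + degE v := by
  simp [degE, Finset.sum_add_distrib]

@[simp] lemma degE_single {m : ℕ} (t : Fin m) (b : ℕ) : degE (single t b) = b := by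
  classical
  simp [degE, single_apply, Finset.sum_ite_eq', eq_comm]

section
variable {σ : Type*} {K : Type*} [Field K]

lemma X_mul_X (j k : σ) : (X j * X k : MvPolynomial σ K) = monomial (single j 1 + single k 1) 1 := by
  rw [← pow_one (X j), ← pow_one (X k), X_pow_eq_monomial, X_pow_eq_monomial, monomial_mul,
    one_mul]

lemma monomial_mem_spanMono {A : Set (σ →₀ ℕ)} {u : σ →₀ ℕ} :
    monomial u (1:K) ∈ Ideal.span ((fun v => monomial v (1:K)) '' A) ↔ ∃ a ∈ A, a ≤ u := by
  classical
  rw [mem_ideal_span_monomial_image]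
  constructor
  · intro h
    exact h u (by classical simp [MvPolynomial.mem_support_iff, coeff_monomial])
  · rintro ⟨a, ha, hau⟩ m hm
    rw [MvPolynomial.mem_support_iff, coeff_monomial] at hm
    have : u = m := by by_contra hne; simp [hne] at hm
    exact ⟨a, ha, this ▸ hau⟩

lemma mem_spanMono {A : Set (σ →₀ ℕ)} {p : MvPolynomial σ K} :
    p ∈ Ideal.span ((fun v => monomial v (1:K)) '' A) ↔
      ∀ m ∈ p.support, ∃ a ∈ A, a ≤ m :=
  mem_ideal_span_monomial_image

lemma pair_le_iff {p q : σ} (h : p ≠ q) {w : σ →₀ ℕ} :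
    single p 1 + single q 1 ≤ w ↔ 1 ≤ w p ∧ 1 ≤ w q := by
  classical
  constructor
  · intro hle
    refine ⟨le_trans ?_ (hle p), le_trans ?_ (hle q)⟩ <;>
      simp [Finsupp.add_apply, single_apply, h, h.symm]
  · intro ⟨h1, h2⟩ t
    rcases eq_or_ne t p with rfl | hp
    · simpa [Finsupp.add_apply, single_apply, h.symm] using h1
    · rcases eq_or_ne t q with rfl | hq
      · simpa [Finsupp.add_apply, single_apply, h] using h2
      · simp [Finsupp.add_apply, single_apply, Ne.symm hp, Ne.symm hq]

lemma degE_pair {m : ℕ} (p q : Fin m) : degE (single p 1 + single q 1) = 2 := by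
  simp [degE_add]

lemma le_add_single {g u : σ →₀ ℕ} {s : σ} (h : g ≤ u + single s 1) (h2 : ¬ g ≤ u) :
    g s = u s + 1 ∧ ∀ t, t ≠ s → g t ≤ u t := by
  classical
  have hts : ∀ t, t ≠ s → g t ≤ u t := by
    intro t hts
    have := h t
    simpa [Finsupp.add_apply, single_apply, Ne.symm hts] using this
  have hs : g s ≤ u s + 1 := by simpa [Finsupp.add_apply] using h s
  have : ¬ g s ≤ u s := by
    intro hgs
    exact h2 fun t => by
      rcases eq_or_ne t s with rfl | ht
      · exact hgs
      · exact hts t ht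
  exact ⟨by omega, hts⟩

end

lemma degE_mono {m : ℕ} {u v : Fin m →₀ ℕ} (h : u ≤ v) : degE u ≤ degE v :=
  Finset.sum_le_sum fun t _ => h t

noncomputable def edgeIdeal' (K : Type*) [Field K] {V : Type*} (G : SimpleGraph V) :
    Ideal (MvPolynomial V K) :=
  Ideal.span {m | ∃ i j, G.Adj i j ∧ m = X i * X j}

def edgeExps {V : Type*} (G : SimpleGraph V) : Set (V →₀ ℕ) :=
  {d | ∃ j k, G.Adj j k ∧ d = single j 1 + single k 1}

lemma edgeIdeal_eq {K : Type*} [Field K] {V : Type*} (G : SimpleGraph V) :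
    edgeIdeal' K G = Ideal.span ((fun v => monomial v (1:K)) '' edgeExps G) := by
  unfold edgeIdeal'
  congr 1
  ext m
  constructor
  · rintro ⟨j, k, h, rfl⟩
    exact ⟨single j 1 + single k 1, ⟨j, k, h, rfl⟩, (X_mul_X j k).symm⟩
  · rintro ⟨d, ⟨j, k, h, rfl⟩, rfl⟩
    exact ⟨j, k, h, (X_mul_X j k).symm⟩

lemma monomial_mem_edgeIdeal {K : Type*} [Field K] {V : Type*} {G : SimpleGraph V}
    {w : V →₀ ℕ} :
    monomial w (1:K) ∈ edgeIdeal' K G ↔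
      ∃ j k, G.Adj j k ∧ single j 1 + single k 1 ≤ w := by
  rw [edgeIdeal_eq, monomial_mem_spanMono]
  constructor
  · rintro ⟨a, ⟨j, k, h, rfl⟩, hle⟩
    exact ⟨j, k, h, hle⟩
  · rintro ⟨j, k, h, hle⟩
    exact ⟨_, ⟨j, k, h, rfl⟩, hle⟩

lemma X_mul_monomial' {K : Type*} [Field K] {σ : Type*} (t : σ) (u : σ →₀ ℕ) :
    (X t) * monomial u (1:K) = monomial (u + single t 1) (1:K) := by
  rw [← pow_one (X t), X_pow_eq_monomial, monomial_mul, one_mul, add_comm]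

section SepFacts
variable {n : ℕ} {K : Type*} [Field K] {G : SimpleGraph (Fin n)} {i : Fin n}
  {J : Ideal (MvPolynomial (Fin (n+1)) K)}

def IsMonomialIdeal' {σ K : Type*} [Field K] (I : Ideal (MvPolynomial σ K)) : Prop :=
  ∃ A : Set (σ →₀ ℕ), I = Ideal.span ((fun u => (monomial u (1 : K))) '' A)

lemma sep_upclosed (hmono : IsMonomialIdeal' J) {u v : Fin (n+1) →₀ ℕ}
    (h : monomial u (1:K) ∈ J) (huv : u ≤ v) : monomial v (1:K) ∈ J := by
  obtain ⟨A, rfl⟩ := hmono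
  rw [monomial_mem_spanMono] at h ⊢
  obtain ⟨a, ha, hau⟩ := h
  exact ⟨a, ha, hau.trans huv⟩

lemma down_apply_ne {u : Fin (n+1) →₀ ℕ} {t : Fin n} (ht : t ≠ i) :
    down i u t = u t.castSucc := by simp [down_apply, ht]

lemma down_apply_i {u : Fin (n+1) →₀ ℕ} :
    down i u i = u i.castSucc + u (Fin.last n) := by simp [down_apply]

lemma down_pair_castSucc (a b : Fin n) :
    down i (single a.castSucc 1 + single b.castSucc 1) = single a 1 + single b 1 := by
  rw [down_add, down_single, down_single, foldvar_castSucc, foldvar_castSucc]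

lemma down_add_last (v : Fin (n+1) →₀ ℕ) :
    down i (v + single (Fin.last n) 1) = down i v + single i 1 := by
  rw [down_add, down_single, foldvar_last]

lemma down_add_castSucc (v : Fin (n+1) →₀ ℕ) :
    down i (v + single i.castSucc 1) = down i v + single i 1 := by
  rw [down_add, down_single, foldvar_castSucc]

lemma sep_L4 (hmap : Ideal.map (sepMap K n i) J = edgeIdeal' K G)
    {u : Fin (n+1) →₀ ℕ} (h : monomial u (1:K) ∈ J) :
    ∃ j k, G.Adj j k ∧ single j 1 + single k 1 ≤ down i u := by
  have hm : monomial (down i u) (1:K) ∈ edgeIdeal' K G := by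
    rw [← sepMap_monomial, ← hmap]
    exact Ideal.mem_map_of_mem _ h
  rwa [monomial_mem_edgeIdeal] at hm

lemma sep_L5 (hnzd : ∀ f, (X (Fin.last n) - X i.castSucc) * f ∈ J → f ∈ J)
    {u : Fin (n+1) →₀ ℕ} (hu : monomial u (1:K) ∉ J) :
    ¬(monomial (u + single (Fin.last n) 1) (1:K) ∈ J ∧
      monomial (u + single i.castSucc 1) (1:K) ∈ J) := by
  rintro ⟨h1, h2⟩
  apply hu
  apply hnzd
  have heq : (X (Fin.last n) - X i.castSucc) * monomial u (1:K)
      = monomial (u + single (Fin.last n) 1) (1:K)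
        - monomial (u + single i.castSucc 1) (1:K) := by
    rw [sub_mul, X_mul_monomial', X_mul_monomial']
  rw [heq]
  exact Ideal.sub_mem J h1 h2

lemma sep_L6 (hmono : IsMonomialIdeal' J)
    (hmap : Ideal.map (sepMap K n i) J = edgeIdeal' K G)
    {j k : Fin n} (hadj : G.Adj j k) :
    ∃ u, monomial u (1:K) ∈ J ∧ down i u = single j 1 + single k 1 := by
  obtain ⟨A, rfl⟩ := hmono
  have him : Ideal.map (sepMap K n i) (Ideal.span ((fun u => monomial u (1:K)) '' A))
      = Ideal.span ((fun v => monomial v (1:K)) '' (down i '' A)) := by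
    rw [Ideal.map_span]
    congr 1
    rw [Set.image_image, Set.image_image]
    exact Set.image_congr' (fun a => sepMap_monomial K i a)
  have hedge : monomial (single j 1 + single k 1) (1:K) ∈ edgeIdeal' K G :=
    monomial_mem_edgeIdeal.2 ⟨j, k, hadj, le_rfl⟩
  rw [← hmap, him, monomial_mem_spanMono] at hedge
  obtain ⟨d, ⟨a, haA, rfl⟩, hle⟩ := hedge
  have haJ : monomial a (1:K) ∈ Ideal.span ((fun u => monomial u (1:K)) '' A) :=
    monomial_mem_spanMono.2 ⟨a, haA, le_rfl⟩
  obtain ⟨j', k', hadj', hle'⟩ := sep_L4 hmap haJ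
  have hdeg : degE (single j 1 + single k 1) ≤ degE (down i a) := by
    rw [degE_pair]
    calc 2 = degE (single j' 1 + single k' 1) := (degE_pair j' k').symm
    _ ≤ degE (down i a) := degE_mono hle'
  exact ⟨a, haJ, eq_of_le_of_degE_le hle hdeg⟩

end SepFacts

section Recon
variable {n : ℕ} {i : Fin n}

lemma down_eq_pair_ne {u : Fin (n+1) →₀ ℕ} {j k : Fin n} (hj : j ≠ i) (hk : k ≠ i)
    (h : down i u = single j 1 + single k 1) :
    u = single j.castSucc 1 + single k.castSucc 1 := by
  classical
  have hi : u i.castSucc + u (Fin.last n) = 0 := by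
    have h5 := DFunLike.congr_fun h i
    rw [down_apply_i, Finsupp.add_apply, single_apply, single_apply, if_neg hj, if_neg hk] at h5
    omega
  ext s
  induction s using Fin.lastCases with
  | last =>
      have h1 : u (Fin.last n) = 0 := by omega
      rw [h1]
      simp [single_apply, (Fin.castSucc_lt_last j).ne, (Fin.castSucc_lt_last k).ne]
  | cast t =>
      rcases eq_or_ne t i with rfl | hti
      · have h1 : u t.castSucc = 0 := by omega
        rw [h1]
        have hj' : j.castSucc ≠ t.castSucc := by simpa [Fin.castSucc_inj] using hj
        have hk' : k.castSucc ≠ t.castSucc := by simpa [Fin.castSucc_inj] using hk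
        simp [single_apply, hj', hk']
      · have := DFunLike.congr_fun h t
        rw [down_apply_ne hti] at this
        rw [this]
        simp [single_apply, Fin.castSucc_inj]

lemma down_eq_pair_i {u : Fin (n+1) →₀ ℕ} {k : Fin n} (hk : k ≠ i)
    (h : down i u = single i 1 + single k 1) :
    u = single (Fin.last n) 1 + single k.castSucc 1 ∨
      u = single i.castSucc 1 + single k.castSucc 1 := by
  classical
  have hi : u i.castSucc + u (Fin.last n) = 1 := by
    have h5 := DFunLike.congr_fun h i
    rw [down_apply_i, Finsupp.add_apply, single_apply, single_apply, if_pos rfl, if_neg hk] at h5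
    omega
  have hval : ∀ t : Fin n, t ≠ i → u t.castSucc = (single i 1 + single k 1 : Fin n →₀ ℕ) t := by
    intro t hti
    have := DFunLike.congr_fun h t
    rwa [down_apply_ne hti] at this
  rcases eq_or_ne (u (Fin.last n)) 1 with h1 | h1
  · left
    have h2 : u i.castSucc = 0 := by omega
    ext s
    induction s using Fin.lastCases with
    | last =>
        rw [h1]
        simp [single_apply, (Fin.castSucc_lt_last k).ne]
    | cast t =>
        rcases eq_or_ne t i with rfl | hti
        · rw [h2]
          have hk' : k.castSucc ≠ t.castSucc := by simpa [Fin.castSucc_inj] using hk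
          simp [single_apply, hk', (Fin.castSucc_lt_last t).ne']
        · rw [hval t hti]
          simp [single_apply, Fin.castSucc_inj, hti.symm, (Fin.castSucc_lt_last t).ne', eq_comm]
  · right
    have h2 : u i.castSucc = 1 := by omega
    have h3 : u (Fin.last n) = 0 := by omega
    ext s
    induction s using Fin.lastCases with
    | last =>
        rw [h3]
        simp [single_apply, (Fin.castSucc_lt_last k).ne, (Fin.castSucc_lt_last i).ne]
    | cast t =>
        rcases eq_or_ne t i with rfl | hti
        · rw [h2]
          have hk' : k.castSucc ≠ t.castSucc := by simpa [Fin.castSucc_inj] using hk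
          simp [single_apply, hk']
        · rw [hval t hti]
          simp [single_apply, Fin.castSucc_inj, hti.symm, eq_comm]

end Recon

section SepMain
variable {n : ℕ} {K : Type*} [Field K] {G : SimpleGraph (Fin n)} {i : Fin n}
  {J : Ideal (MvPolynomial (Fin (n+1)) K)}

lemma sep_edge_off (hmono : IsMonomialIdeal' J)
    (hmap : Ideal.map (sepMap K n i) J = edgeIdeal' K G)
    {j k : Fin n} (hadj : G.Adj j k) (hj : j ≠ i) (hk : k ≠ i) :
    monomial (single j.castSucc 1 + single k.castSucc 1) (1:K) ∈ J := by
  obtain ⟨u, hu, hdown⟩ := sep_L6 hmono hmap hadj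
  rwa [down_eq_pair_ne hj hk hdown] at hu

lemma sep_edge_at (hmono : IsMonomialIdeal' J)
    (hmap : Ideal.map (sepMap K n i) J = edgeIdeal' K G)
    {k : Fin n} (hadj : G.Adj i k) :
    monomial (single (Fin.last n) 1 + single k.castSucc 1) (1:K) ∈ J ∨
      monomial (single i.castSucc 1 + single k.castSucc 1) (1:K) ∈ J := by
  obtain ⟨u, hu, hdown⟩ := sep_L6 hmono hmap hadj
  rcases down_eq_pair_i hadj.ne' hdown with h | h
  · left; rwa [h] at hu
  · right; rwa [h] at hu

lemma sep_cross (hmono : IsMonomialIdeal' J)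
    (hmap : Ideal.map (sepMap K n i) J = edgeIdeal' K G)
    (hnzd : ∀ f, (X (Fin.last n) - X i.castSucc) * f ∈ J → f ∈ J)
    {a b : Fin n}
    (ha : monomial (single (Fin.last n) 1 + single a.castSucc 1) (1:K) ∈ J)
    (hb : monomial (single i.castSucc 1 + single b.castSucc 1) (1:K) ∈ J)
    (hbi : b ≠ i) :
    a ≠ b ∧ G.Adj a b := by
  classical
  set u : Fin (n+1) →₀ ℕ := single a.castSucc 1 + single b.castSucc 1 with hu_def
  have hQu : monomial u (1:K) ∈ J := by
    by_contra hno
    refine sep_L5 hnzd hno ⟨?_, ?_⟩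
    · refine sep_upclosed hmono ha ?_
      rw [pair_le_iff (Fin.castSucc_lt_last a).ne']
      constructor
      · simp [hu_def, Finsupp.add_apply, single_apply, (Fin.castSucc_lt_last a).ne,
          (Fin.castSucc_lt_last b).ne]
      · simp only [hu_def, Finsupp.add_apply, single_apply]
        split_ifs <;> omega
    · refine sep_upclosed hmono hb ?_
      have hib : i.castSucc ≠ b.castSucc := by
        simpa [Fin.castSucc_inj] using hbi.symm
      rw [pair_le_iff hib]
      constructor
      · simp only [hu_def, Finsupp.add_apply, single_apply]
        split_ifs <;> omega
      · simp only [hu_def, Finsupp.add_apply, single_apply]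
        split_ifs <;> omega
  obtain ⟨j, k, hadj, hle⟩ := sep_L4 hmap hQu
  have hdown : down i u = single a 1 + single b 1 := down_pair_castSucc a b
  rw [hdown] at hle
  have hmem : ∀ t : Fin n, 1 ≤ (single a 1 + single b 1 : Fin n →₀ ℕ) t → t = a ∨ t = b := by
    intro t ht
    by_contra hc
    push_neg at hc
    simp [Finsupp.add_apply, single_apply, Ne.symm hc.1, Ne.symm hc.2] at ht
  have hj1 : (1:ℕ) ≤ (single j 1 + single k 1 : Fin n →₀ ℕ) j := by
    simp [Finsupp.add_apply, single_apply]
  have hk1 : (1:ℕ) ≤ (single j 1 + single k 1 : Fin n →₀ ℕ) k := by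
    simp [Finsupp.add_apply, single_apply]
  have hja := hmem j (le_trans hj1 (hle j))
  have hka := hmem k (le_trans hk1 (hle k))
  have hjk : j ≠ k := hadj.ne
  rcases hja with rfl | rfl <;> rcases hka with rfl | rfl
  · exact absurd rfl hjk
  · exact ⟨hjk, hadj⟩
  · exact ⟨hjk.symm, hadj.symm⟩
  · exact absurd rfl hjk

end SepMain

section SepNonempty
variable {n : ℕ} {K : Type*} [Field K] {G : SimpleGraph (Fin n)} {i : Fin n}
  {J : Ideal (MvPolynomial (Fin (n+1)) K)}

def DividesMinGen' {σ K : Type*} [Field K] (I : Ideal (MvPolynomial σ K))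
    (f : MvPolynomial σ K) : Prop :=
  ∃ u : σ →₀ ℕ, monomial u (1 : K) ∈ I ∧
    (∀ v : σ →₀ ℕ, v ≤ u → monomial v (1 : K) ∈ I → v = u) ∧
    f ∣ monomial u (1 : K)

lemma sep_key (hmono : IsMonomialIdeal' J)
    (hmap : Ideal.map (sepMap K n i) J = edgeIdeal' K G)
    {v : Fin (n+1) →₀ ℕ} (hvnJ : monomial v (1:K) ∉ J)
    {j k : Fin n} (hadj : G.Adj j k)
    (hle : single j 1 + single k 1 ≤ down i v + single i 1) :
    ∃ k₀, G.Adj i k₀ ∧ 1 ≤ v k₀.castSucc := by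
  classical
  have hpt : ∀ t : Fin n, t ≠ i →
      (single j 1 + single k 1 : Fin n →₀ ℕ) t ≤ down i v t := by
    intro t ht
    have := hle t
    simpa [Finsupp.add_apply, single_apply, Ne.symm ht] using this
  by_cases hji : j = i
  · subst hji
    refine ⟨k, hadj, ?_⟩
    have hki : k ≠ j := hadj.ne'
    have := hpt k hki
    rw [down_apply_ne hki] at this
    have h1 : (1:ℕ) ≤ (single j 1 + single k 1 : Fin n →₀ ℕ) k := by
      simp [Finsupp.add_apply, single_apply]
    omega
  · by_cases hki : k = i
    · subst hki
      refine ⟨j, hadj.symm, ?_⟩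
      have := hpt j hji
      rw [down_apply_ne hji] at this
      have h1 : (1:ℕ) ≤ (single j 1 + single k 1 : Fin n →₀ ℕ) j := by
        simp [Finsupp.add_apply, single_apply]
      omega
    · exfalso
      have hj1 : 1 ≤ v j.castSucc := by
        have := hpt j hji
        rw [down_apply_ne hji] at this
        have h1 : (1:ℕ) ≤ (single j 1 + single k 1 : Fin n →₀ ℕ) j := by
          simp [Finsupp.add_apply, single_apply]
        omega
      have hk1 : 1 ≤ v k.castSucc := by
        have := hpt k hki
        rw [down_apply_ne hki] at this
        have h1 : (1:ℕ) ≤ (single j 1 + single k 1 : Fin n →₀ ℕ) k := by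
          simp [Finsupp.add_apply, single_apply]
        omega
      have hjk' : j.castSucc ≠ k.castSucc := by
        simpa [Fin.castSucc_inj] using hadj.ne
      have hgen := sep_edge_off hmono hmap hadj hji hki
      have : monomial v (1:K) ∈ J :=
        sep_upclosed hmono hgen ((pair_le_iff hjk').2 ⟨hj1, hk1⟩)
      exact hvnJ this

lemma sep_exists_A (hmono : IsMonomialIdeal' J)
    (hmap : Ideal.map (sepMap K n i) J = edgeIdeal' K G)
    (hnzd : ∀ f, (X (Fin.last n) - X i.castSucc) * f ∈ J → f ∈ J)
    (hy : DividesMinGen' J (X (Fin.last n))) :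
    ∃ a, G.Adj i a ∧ monomial (single (Fin.last n) 1 + single a.castSucc 1) (1:K) ∈ J := by
  classical
  obtain ⟨u, huJ, humin, hdvd⟩ := hy
  have hy1 : u (Fin.last n) ≠ 0 := by
    rcases X_dvd_monomial.1 hdvd with h | h
    · exact absurd h one_ne_zero
    · exact h
  set v := u - single (Fin.last n) 1 with hv_def
  have hvu : v + single (Fin.last n) 1 = u :=
    tsub_add_cancel_of_le (single_le_iff.2 (by omega))
  have hvne : v ≠ u := by
    intro hc
    have := DFunLike.congr_fun hc (Fin.last n)
    rw [hv_def, tsub_apply, single_eq_same] at this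
    omega
  have hvnJ : monomial v (1:K) ∉ J := fun hc => hvne (humin v tsub_le_self hc)
  have hviv : monomial (v + single i.castSucc 1) (1:K) ∉ J := by
    intro hc
    exact sep_L5 hnzd hvnJ ⟨by rw [hvu]; exact huJ, hc⟩
  obtain ⟨j, k, hadj, hle⟩ := sep_L4 hmap huJ
  rw [← hvu, down_add_last] at hle
  obtain ⟨k₀, hadj₀, hk₀⟩ := sep_key hmono hmap hvnJ hadj hle
  rcases sep_edge_at hmono hmap hadj₀ with hA | hB
  · exact ⟨k₀, hadj₀, hA⟩
  · exfalso
    apply hviv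
    refine sep_upclosed hmono hB ?_
    have hik : i.castSucc ≠ k₀.castSucc := by
      simpa [Fin.castSucc_inj] using hadj₀.ne
    rw [pair_le_iff hik]
    constructor
    · simp [Finsupp.add_apply, single_apply]
    · have : (single i.castSucc 1 : Fin (n+1) →₀ ℕ) k₀.castSucc = 0 := by
        simp [single_apply, hik]
      simp only [Finsupp.add_apply, this]
      omega

lemma sep_exists_B (hmono : IsMonomialIdeal' J)
    (hmap : Ideal.map (sepMap K n i) J = edgeIdeal' K G)
    (hnzd : ∀ f, (X (Fin.last n) - X i.castSucc) * f ∈ J → f ∈ J)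
    (hxi : DividesMinGen' J (X i.castSucc)) :
    ∃ b, G.Adj i b ∧ monomial (single i.castSucc 1 + single b.castSucc 1) (1:K) ∈ J := by
  classical
  obtain ⟨u, huJ, humin, hdvd⟩ := hxi
  have hy1 : u i.castSucc ≠ 0 := by
    rcases X_dvd_monomial.1 hdvd with h | h
    · exact absurd h one_ne_zero
    · exact h
  set v := u - single i.castSucc 1 with hv_def
  have hvu : v + single i.castSucc 1 = u :=
    tsub_add_cancel_of_le (single_le_iff.2 (by omega))
  have hvne : v ≠ u := by
    intro hc
    have := DFunLike.congr_fun hc i.castSucc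
    rw [hv_def, tsub_apply, single_eq_same] at this
    omega
  have hvnJ : monomial v (1:K) ∉ J := fun hc => hvne (humin v tsub_le_self hc)
  have hvy : monomial (v + single (Fin.last n) 1) (1:K) ∉ J := by
    intro hc
    exact sep_L5 hnzd hvnJ ⟨hc, by rw [hvu]; exact huJ⟩
  obtain ⟨j, k, hadj, hle⟩ := sep_L4 hmap huJ
  rw [← hvu, down_add_castSucc] at hle
  obtain ⟨k₀, hadj₀, hk₀⟩ := sep_key hmono hmap hvnJ hadj hle
  rcases sep_edge_at hmono hmap hadj₀ with hA | hB
  · exfalso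
    apply hvy
    refine sep_upclosed hmono hA ?_
    have hlk : (Fin.last n) ≠ k₀.castSucc := (Fin.castSucc_lt_last k₀).ne'
    rw [pair_le_iff hlk]
    constructor
    · simp [Finsupp.add_apply, single_apply]
    · have : (single (Fin.last n) 1 : Fin (n+1) →₀ ℕ) k₀.castSucc = 0 := by
        simp [single_apply, hlk]
      simp only [Finsupp.add_apply, this]
      omega
  · exact ⟨k₀, hadj₀, hB⟩

end SepNonempty

lemma dirB {n : ℕ} {K : Type*} [Field K] {G : SimpleGraph (Fin n)} {i : Fin n}
    {J : Ideal (MvPolynomial (Fin (n+1)) K)}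
    (hmono : IsMonomialIdeal' J)
    (hmap : Ideal.map (sepMap K n i) J = edgeIdeal' K G)
    (hy : DividesMinGen' J (X (Fin.last n)))
    (hxi : DividesMinGen' J (X i.castSucc))
    (hnzd : ∀ f, (X (Fin.last n) - X i.castSucc) * f ∈ J → f ∈ J) :
    ¬ (SimpleGraph.fromRel (fun a b : G.neighborSet i => ¬ G.Adj ↑a ↑b)).Connected := by
  intro hcon
  obtain ⟨a, hadja, hQa⟩ := sep_exists_A hmono hmap hnzd hy
  obtain ⟨b, hadjb, hQb⟩ := sep_exists_B hmono hmap hnzd hxi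
  set H := SimpleGraph.fromRel (fun a b : G.neighborSet i => ¬ G.Adj ↑a ↑b) with hH
  have step : ∀ (x z : G.neighborSet i), H.Adj x z →
      monomial (single (Fin.last n) 1 + single (x : Fin n).castSucc 1) (1:K) ∈ J →
      monomial (single (Fin.last n) 1 + single (z : Fin n).castSucc 1) (1:K) ∈ J := by
    intro x z hxz hx
    have hzadj : G.Adj i (z : Fin n) := z.2
    rcases sep_edge_at hmono hmap hzadj with hA | hB
    · exact hA
    · exfalso
      have hcr := sep_cross hmono hmap hnzd hx hB (G.ne_of_adj hzadj).symm
      rw [hH, SimpleGraph.fromRel_adj] at hxz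
      rcases hxz.2 with h | h
      · exact h hcr.2
      · exact h hcr.2.symm
  have reach : ∀ (x z : G.neighborSet i), H.Reachable x z →
      monomial (single (Fin.last n) 1 + single (x : Fin n).castSucc 1) (1:K) ∈ J →
      monomial (single (Fin.last n) 1 + single (z : Fin n).castSucc 1) (1:K) ∈ J := by
    intro x z hr
    obtain ⟨w⟩ := hr
    induction w with
    | nil => exact id
    | cons h p ih => intro hx; exact ih (step _ _ h hx)
  have hQb' := reach ⟨a, hadja⟩ ⟨b, hadjb⟩ (hcon.preconnected _ _) hQa
  have hfin := sep_cross hmono hmap hnzd hQb' hQb (G.ne_of_adj hadjb).symm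
  exact hfin.1 rfl

lemma map_spanMono {n : ℕ} {K : Type*} [Field K] (i : Fin n) (A : Set (Fin (n+1) →₀ ℕ)) :
    Ideal.map (sepMap K n i) (Ideal.span ((fun u => monomial u (1:K)) '' A))
      = Ideal.span ((fun v => monomial v (1:K)) '' (down i '' A)) := by
  rw [Ideal.map_span]
  congr 1
  rw [Set.image_image, Set.image_image]
  exact Set.image_congr' (fun a => sepMap_monomial K i a)

lemma minGen_of_pair {n : ℕ} {K : Type*} [Field K] {Gens : Set (Fin (n+1) →₀ ℕ)}
    (hdeg : ∀ g ∈ Gens, degE g = 2) {p q : Fin (n+1)} (hpq : p ≠ q)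
    (hg : single p 1 + single q 1 ∈ Gens) :
    DividesMinGen' (Ideal.span ((fun u => monomial u (1:K)) '' Gens)) (X p) := by
  refine ⟨single p 1 + single q 1, Ideal.subset_span ⟨_, hg, rfl⟩, ?_, ?_⟩
  · intro v hv hvJ
    rw [monomial_mem_spanMono] at hvJ
    obtain ⟨g, hgG, hgle⟩ := hvJ
    have h2 : degE (single p 1 + single q 1) ≤ degE g := by
      rw [degE_pair, hdeg g hgG]
    have := eq_of_le_of_degE_le (hgle.trans hv) h2
    have hgv : g = single p 1 + single q 1 := this
    exact le_antisymm hv (hgv ▸ hgle)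
  · exact ⟨monomial (single q 1) 1, by rw [X_mul_monomial']; rw [add_comm (single q 1) (single p 1)]⟩

lemma dirA {n : ℕ} (K : Type*) [Field K] {G : SimpleGraph (Fin n)} (i : Fin n)
    {w₀ : Fin n} (hw₀ : G.Adj i w₀)
    (hnc : ¬ (SimpleGraph.fromRel (fun a b : G.neighborSet i => ¬ G.Adj ↑a ↑b)).Connected) :
    ∃ J : Ideal (MvPolynomial (Fin (n+1)) K), IsMonomialIdeal' J ∧
      Ideal.map (sepMap K n i) J = edgeIdeal' K G ∧
      DividesMinGen' J (X (Fin.last n)) ∧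
      DividesMinGen' J (X i.castSucc) ∧
      ∀ f, (X (Fin.last n) - X i.castSucc) * f ∈ J → f ∈ J := by
  classical
  set H := SimpleGraph.fromRel (fun a b : G.neighborSet i => ¬ G.Adj ↑a ↑b) with hH
  have hpre : ¬ H.Preconnected := by
    intro hp
    have : Nonempty (G.neighborSet i) := ⟨⟨w₀, hw₀⟩⟩
    exact hnc ⟨hp⟩
  rw [SimpleGraph.Preconnected] at hpre
  push_neg at hpre
  obtain ⟨x₀, z₀, hxz⟩ := hpre
  set A : Set (Fin n) := {z | ∃ h : G.Adj i z, H.Reachable x₀ ⟨z, h⟩} with hA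
  have hx₀A : (x₀ : Fin n) ∈ A := ⟨x₀.2, by rw [Subtype.coe_eta]⟩
  have hz₀A : (z₀ : Fin n) ∉ A := by
    rintro ⟨h, hr⟩
    exact hxz hr
  have cross : ∀ z w : Fin n, z ∈ A → G.Adj i w → w ∉ A → G.Adj z w := by
    intro z w hz hiw hwA
    by_contra hzw
    obtain ⟨hzadj, hzr⟩ := hz
    have hne : z ≠ w := by
      rintro rfl
      exact hwA ⟨hzadj, hzr⟩
    have hadjH : H.Adj ⟨z, hzadj⟩ ⟨w, hiw⟩ := by
      rw [hH, SimpleGraph.fromRel_adj]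
      exact ⟨by simpa [Subtype.ext_iff] using hne, Or.inl hzw⟩
    exact hwA ⟨hiw, hzr.trans hadjH.reachable⟩
  -- the generators
  set Gens : Set (Fin (n+1) →₀ ℕ) :=
    ({d | ∃ j k, G.Adj j k ∧ j ≠ i ∧ k ≠ i ∧ d = single j.castSucc 1 + single k.castSucc 1}
    ∪ {d | ∃ a, a ∈ A ∧ d = single (Fin.last n) 1 + single a.castSucc 1})
    ∪ {d | ∃ b, G.Adj i b ∧ b ∉ A ∧ d = single i.castSucc 1 + single b.castSucc 1} with hGens
  have hAadj : ∀ a ∈ A, G.Adj i a := fun a ha => ha.1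
  have hdeg : ∀ g ∈ Gens, degE g = 2 := by
    rintro g ((⟨j, k, _, _, _, rfl⟩ | ⟨a, _, rfl⟩) | ⟨b, _, _, rfl⟩) <;> exact degE_pair _ _
  have gens_y : ∀ g ∈ Gens, g (Fin.last n) ≠ 0 →
      ∃ a, a ∈ A ∧ g = single (Fin.last n) 1 + single a.castSucc 1 := by
    rintro g ((⟨j, k, _, _, _, rfl⟩ | ⟨a, ha, rfl⟩) | ⟨b, _, _, rfl⟩) hgy
    · exfalso
      apply hgy
      simp [Finsupp.add_apply, single_apply, (Fin.castSucc_lt_last j).ne,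
        (Fin.castSucc_lt_last k).ne]
    · exact ⟨a, ha, rfl⟩
    · exfalso
      apply hgy
      simp [Finsupp.add_apply, single_apply, (Fin.castSucc_lt_last i).ne,
        (Fin.castSucc_lt_last b).ne]
  have gens_iv : ∀ g ∈ Gens, g i.castSucc ≠ 0 →
      ∃ b, G.Adj i b ∧ b ∉ A ∧ g = single i.castSucc 1 + single b.castSucc 1 := by
    rintro g ((⟨j, k, hadj, hj, hk, rfl⟩ | ⟨a, ha, rfl⟩) | ⟨b, hb1, hb2, rfl⟩) hgi
    · exfalso
      apply hgi
      have hj' : j.castSucc ≠ i.castSucc := by simpa [Fin.castSucc_inj] using hj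
      have hk' : k.castSucc ≠ i.castSucc := by simpa [Fin.castSucc_inj] using hk
      simp [Finsupp.add_apply, single_apply, hj', hk']
    · exfalso
      apply hgi
      have ha' : a.castSucc ≠ i.castSucc := by
        simpa [Fin.castSucc_inj] using (G.ne_of_adj (hAadj a ha)).symm
      simp [Finsupp.add_apply, single_apply, (Fin.castSucc_lt_last i).ne', ha']
    · exact ⟨b, hb1, hb2, rfl⟩
  have hsets : down i '' Gens = edgeExps G := by
    ext d
    constructor
    · rintro ⟨g, ((⟨j, k, hadj, hj, hk, rfl⟩ | ⟨a, ha, rfl⟩) | ⟨b, hb1, hb2, rfl⟩), rfl⟩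
      · exact ⟨j, k, hadj, down_pair_castSucc j k⟩
      · refine ⟨i, a, hAadj a ha, ?_⟩
        rw [down_add, down_single, down_single, foldvar_last, foldvar_castSucc]
      · refine ⟨i, b, hb1, ?_⟩
        rw [down_add, down_single, down_single, foldvar_castSucc, foldvar_castSucc]
    · rintro ⟨j, k, hadj, rfl⟩
      by_cases hj : j = i
      · subst hj
        by_cases hk : k ∈ A
        · refine ⟨single (Fin.last n) 1 + single k.castSucc 1, Or.inl (Or.inr ⟨k, hk, rfl⟩), ?_⟩
          rw [down_add, down_single, down_single, foldvar_last, foldvar_castSucc]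
        · exact ⟨single j.castSucc 1 + single k.castSucc 1, Or.inr ⟨k, hadj, hk, rfl⟩,
            down_pair_castSucc j k⟩
      · by_cases hk : k = i
        · subst hk
          by_cases hja : j ∈ A
          · refine ⟨single (Fin.last n) 1 + single j.castSucc 1, Or.inl (Or.inr ⟨j, hja, rfl⟩),
              ?_⟩
            rw [down_add, down_single, down_single, foldvar_last, foldvar_castSucc,
              add_comm]
          · refine ⟨single k.castSucc 1 + single j.castSucc 1,
              Or.inr ⟨j, hadj.symm, hja, rfl⟩, ?_⟩
            rw [down_pair_castSucc, add_comm]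
        · exact ⟨single j.castSucc 1 + single k.castSucc 1,
            Or.inl (Or.inl ⟨j, k, hadj, hj, hk, rfl⟩), down_pair_castSucc j k⟩
  refine ⟨Ideal.span ((fun u => monomial u (1:K)) '' Gens), ⟨Gens, rfl⟩, ?_, ?_, ?_, ?_⟩
  · rw [map_spanMono, edgeIdeal_eq, hsets]
  · exact minGen_of_pair hdeg (Fin.castSucc_lt_last x₀.1).ne'
      (Or.inl (Or.inr ⟨x₀.1, hx₀A, rfl⟩))
  · have hz₀i : (z₀ : Fin n) ≠ i := (G.ne_of_adj z₀.2).symm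
    exact minGen_of_pair hdeg (by simpa [Fin.castSucc_inj] using (Ne.symm hz₀i))
      (Or.inr ⟨z₀.1, z₀.2, hz₀A, rfl⟩)
  · intro f hf
    rw [mem_spanMono] at hf ⊢
    intro m hm
    rw [MvPolynomial.mem_support_iff] at hm
    have cf : ∀ m : Fin (n+1) →₀ ℕ,
        coeff m ((X (Fin.last n) - X i.castSucc) * f)
          = (if (Fin.last n) ∈ m.support then coeff (m - single (Fin.last n) 1) f else 0)
            - (if i.castSucc ∈ m.support then coeff (m - single i.castSucc 1) f else 0) := by
      intro m
      rw [sub_mul, coeff_sub, coeff_X_mul', coeff_X_mul']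
    have Hm : ∀ m : Fin (n+1) →₀ ℕ,
        coeff m ((X (Fin.last n) - X i.castSucc) * f) ≠ 0 → ∃ g ∈ Gens, g ≤ m := by
      intro m hm'
      exact hf m (MvPolynomial.mem_support_iff.2 hm')
    suffices main : ∀ N (u : Fin (n+1) →₀ ℕ), u i.castSucc = N → coeff u f ≠ 0 →
        ∃ g ∈ Gens, g ≤ u by exact main _ m rfl hm
    intro N
    induction N using Nat.strong_induction_on with
    | _ N IH =>
    intro u hN hc
    by_contra hno
    by_cases hcase : ∃ g ∈ Gens, g ≤ u + single (Fin.last n) 1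
    · obtain ⟨g, hg, hgle⟩ := hcase
      have hgnu : ¬ g ≤ u := fun h => hno ⟨g, hg, h⟩
      obtain ⟨hgy, hgoth⟩ := le_add_single hgle hgnu
      obtain ⟨a, haA, rfl⟩ := gens_y g hg (by omega)
      have hgyval : (single (Fin.last n) 1 + single a.castSucc 1 : Fin (n+1) →₀ ℕ)
          (Fin.last n) = 1 := by
        simp [Finsupp.add_apply, single_apply, (Fin.castSucc_lt_last a).ne]
      rw [hgyval] at hgy
      have hulast : u (Fin.last n) = 0 := by omega
      have hgaval : (single (Fin.last n) 1 + single a.castSucc 1 : Fin (n+1) →₀ ℕ)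
          a.castSucc = 1 := by
        simp [Finsupp.add_apply, single_apply, (Fin.castSucc_lt_last a).ne']
      have hua : 1 ≤ u a.castSucc := by
        have h3 := hgoth a.castSucc (Fin.castSucc_lt_last a).ne
        rw [hgaval] at h3
        exact h3
      have hm'c : coeff (u + single i.castSucc 1) ((X (Fin.last n) - X i.castSucc) * f)
          = - coeff u f := by
        rw [cf]
        have h1 : (Fin.last n) ∉ (u + single i.castSucc 1).support := by
          rw [Finsupp.mem_support_iff]
          simp [Finsupp.add_apply, single_apply, (Fin.castSucc_lt_last i).ne,
            (Fin.castSucc_lt_last i).ne', hulast]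
        have h2 : i.castSucc ∈ (u + single i.castSucc 1).support := by
          rw [Finsupp.mem_support_iff]
          simp [Finsupp.add_apply]
        rw [if_neg h1, if_pos h2, add_tsub_cancel_right, zero_sub]
      obtain ⟨g', hg', hgle'⟩ := Hm _ (by rw [hm'c]; exact neg_ne_zero.2 hc)
      have hgnu' : ¬ g' ≤ u := fun h => hno ⟨g', hg', h⟩
      obtain ⟨hgiv, hgoth'⟩ := le_add_single hgle' hgnu'
      obtain ⟨b, hbadj, hbA, rfl⟩ := gens_iv g' hg' (by omega)
      have hbi : b ≠ i := (G.ne_of_adj hbadj).symm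
      have hbival : i.castSucc ≠ b.castSucc := by
        simpa [Fin.castSucc_inj] using hbi.symm
      have hbval : (single i.castSucc 1 + single b.castSucc 1 : Fin (n+1) →₀ ℕ)
          b.castSucc = 1 := by
        simp [Finsupp.add_apply, single_apply, hbival]
      have hub : 1 ≤ u b.castSucc := by
        have h3 := hgoth' b.castSucc (Ne.symm hbival)
        rw [hbval] at h3
        exact h3
      have haadj : G.Adj i a := hAadj a haA
      have hadjab : G.Adj a b := cross a b haA hbadj hbA
      have hab' : a.castSucc ≠ b.castSucc := by
        simpa [Fin.castSucc_inj] using hadjab.ne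
      exact hno ⟨single a.castSucc 1 + single b.castSucc 1,
        Or.inl (Or.inl ⟨a, b, hadjab, (G.ne_of_adj haadj).symm, hbi, rfl⟩),
        (pair_le_iff hab').2 ⟨hua, hub⟩⟩
    · have h0 : coeff (u + single (Fin.last n) 1) ((X (Fin.last n) - X i.castSucc) * f)
          = 0 := by
        by_contra hc0
        exact hcase (Hm _ hc0)
      rw [cf] at h0
      have h1 : (Fin.last n) ∈ (u + single (Fin.last n) 1).support := by
        rw [Finsupp.mem_support_iff]
        simp [Finsupp.add_apply]
      rw [if_pos h1, add_tsub_cancel_right] at h0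
      by_cases hiu : u i.castSucc = 0
      · have h2 : i.castSucc ∉ (u + single (Fin.last n) 1).support := by
          rw [Finsupp.mem_support_iff]
          simp [Finsupp.add_apply, single_apply, (Fin.castSucc_lt_last i).ne,
            (Fin.castSucc_lt_last i).ne', hiu]
        rw [if_neg h2, sub_zero] at h0
        exact hc h0
      · have h2 : i.castSucc ∈ (u + single (Fin.last n) 1).support := by
          rw [Finsupp.mem_support_iff]
          simp [Finsupp.add_apply, single_apply, (Fin.castSucc_lt_last i).ne,
            (Fin.castSucc_lt_last i).ne', hiu]
        rw [if_pos h2, sub_eq_zero] at h0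
        have hu'iv : ((u + single (Fin.last n) 1 - single i.castSucc 1 : Fin (n+1) →₀ ℕ))
            i.castSucc = N - 1 := by
          rw [tsub_apply, Finsupp.add_apply, single_apply, single_apply]
          rw [if_neg (Fin.castSucc_lt_last i).ne', if_pos rfl]
          omega
        have hlt : N - 1 < N := by omega
        obtain ⟨g, hg, hgle⟩ := IH (N-1) hlt _ hu'iv (by rw [← h0]; exact hc)
        exact hcase ⟨g, hg, hgle.trans tsub_le_self⟩

end AuxSep

/-- a graph `G` is inseparable iff for every vertex `i` the complement of
the induced subgraph of `G` on the neighborhood `N(i)` is connected. -/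
theorem inseparable_iff_complement_neighborhoods_connected {n : ℕ} (K : Type*) [Field K]
    (G : SimpleGraph (Fin n)) (hiso : ∀ v, ∃ w, G.Adj v w) :
    ¬ IsSeparableIdeal (edgeIdeal K G) ↔
      ∀ i : Fin n,
        (SimpleGraph.fromRel (fun a b : G.neighborSet i => ¬ G.Adj ↑a ↑b)).Connected := by
  constructor
  · intro hns i
    by_contra hnc
    obtain ⟨w₀, hw₀⟩ := hiso i
    obtain ⟨J, h1, h2, h3, h4, h5⟩ := dirA K i hw₀ hnc
    exact hns ⟨i, J, h1, h2, h3, h4, h5⟩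
  · intro hcon hsep
    obtain ⟨i, J, hmono, hmap, hy, hxi, hnzd⟩ := hsep
    exact dirB hmono hmap hy hxi hnzd (hcon i)
end

section
/- For every tree T on m vertices, the generic bi-CM graph G_T is an inseparable graph; equivalently, for every vertex (i,j) of G_T, the complement of the induced subgraph on the neighborhood of (i,j) in G_T is connected. -/
open MvPolynomial

/-- A graph is chordal if every cycle of length at least 4 has a chord: a pair of
vertices of the cycle which are adjacent in the graph but whose edge is not an edge
of the cycle. -/
def IsChordal {V : Type*} (G : SimpleGraph V) : Prop :=
  ∀ (v : V) (c : G.Walk v v), c.IsCycle → 4 ≤ c.length →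
    ∃ x y, x ∈ c.support ∧ y ∈ c.support ∧ G.Adj x y ∧ s(x, y) ∉ c.edges

/-- The generic bi-CM graph `G_T` attached to a tree `T`: its vertices are the ordered
pairs `(i,j)` with `{i,j}` an edge of `T`, and `{(i,k),(j,l)}` is an edge of `G_T` iff
for the (unique) path `i = i_0, i_1, …, i_r = j` in `T` one has `k = i_1` and
`l = i_{r-1}`. -/
def genericBiCM {m : ℕ} (T : SimpleGraph (Fin m)) :
    SimpleGraph {p : Fin m × Fin m // T.Adj p.1 p.2} :=
  SimpleGraph.fromRel (fun a b => ∃ p : T.Walk a.1.1 b.1.1,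
    p.IsPath ∧ p.getVert 1 = a.1.2 ∧ p.getVert (p.length - 1) = b.1.2)



private lemma genericBiCM_key_aux {m : ℕ} {T : SimpleGraph (Fin m)} (hT : T.IsTree)
    {i j a : Fin m} (hij : i ≠ j) (p : T.Walk i a) (hp : p.IsPath) (hp1 : p.getVert 1 = j)
    (s : T.Walk j a) (hs : s.IsPath) (hs1 : s.getVert 1 = i) : False := by
  cases p with
  | nil => exact hij hp1
  | cons h p' =>
    rw [SimpleGraph.Walk.getVert_cons_succ, SimpleGraph.Walk.getVert_zero] at hp1
    subst hp1
    rw [SimpleGraph.Walk.cons_isPath_iff] at hp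
    have hmem : i ∈ s.support := by
      cases s with
      | nil => exact absurd hs1 (Ne.symm hij)
      | cons h2 s' =>
        rw [SimpleGraph.Walk.mem_support_iff_exists_getVert]
        exact ⟨1, hs1, by simp⟩
    have hsp : s = p' := (hT.existsUnique_path _ a).unique hs hp.1
    exact hp.2 (hsp ▸ hmem)

private lemma genericBiCM_adj_walk {m : ℕ} {T : SimpleGraph (Fin m)}
    {x y : {p : Fin m × Fin m // T.Adj p.1 p.2}}
    (h : (genericBiCM T).Adj x y) :
    ∃ p : T.Walk x.1.1 y.1.1, p.IsPath ∧ p.getVert 1 = x.1.2 := by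
  rw [genericBiCM, SimpleGraph.fromRel_adj] at h
  obtain ⟨hne, ⟨p, hp, h1, h2⟩ | ⟨q, hq, h1, h2⟩⟩ := h
  · exact ⟨p, hp, h1⟩
  · refine ⟨q.reverse, hq.reverse, ?_⟩
    rw [SimpleGraph.Walk.getVert_reverse]
    exact h2

/-- for every tree `T`, the generic bi-CM graph `G_T` is inseparable;
equivalently, for every vertex of `G_T` the complement of the induced subgraph on its
neighborhood is connected. -/
theorem genericBiCM_inseparable {m : ℕ} (T : SimpleGraph (Fin m)) (hT : T.IsTree) :
    ∀ v : {p : Fin m × Fin m // T.Adj p.1 p.2},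
      (SimpleGraph.fromRel (fun a b : (genericBiCM T).neighborSet v =>
        ¬ (genericBiCM T).Adj ↑a ↑b)).Connected := by
  rintro ⟨⟨i, j⟩, hij⟩
  set v : {p : Fin m × Fin m // T.Adj p.1 p.2} := ⟨(i, j), hij⟩ with hv
  set w : {p : Fin m × Fin m // T.Adj p.1 p.2} := ⟨(j, i), hij.symm⟩ with hwdef
  have hw : (genericBiCM T).Adj v w := by
    rw [genericBiCM, SimpleGraph.fromRel_adj]
    refine ⟨fun hcon => hij.ne (congrArg (fun z => z.1.1) hcon), Or.inl ?_⟩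
    exact ⟨SimpleGraph.Walk.cons hij SimpleGraph.Walk.nil, by simp [hv, hij.ne], rfl, rfl⟩
  have hwmem : w ∈ (genericBiCM T).neighborSet v := hw
  set W : ((genericBiCM T).neighborSet v : Set _) := ⟨w, hwmem⟩ with hWdef
  have hkey : ∀ x : ((genericBiCM T).neighborSet v : Set _),
      ¬ (genericBiCM T).Adj ↑x w := by
    intro x hadj
    obtain ⟨p, hp, hp1⟩ := genericBiCM_adj_walk (x.2 : (genericBiCM T).Adj v ↑x)
    obtain ⟨s, hs, hs1⟩ := genericBiCM_adj_walk hadj.symm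
    exact genericBiCM_key_aux hT hij.ne p hp hp1 s hs hs1
  have hreach : ∀ x : ((genericBiCM T).neighborSet v : Set _),
      (SimpleGraph.fromRel (fun a b : (genericBiCM T).neighborSet v =>
        ¬ (genericBiCM T).Adj ↑a ↑b)).Reachable x W := by
    intro x
    by_cases hxW : x = W
    · exact hxW ▸ SimpleGraph.Reachable.refl x
    · refine SimpleGraph.Adj.reachable ?_
      rw [SimpleGraph.fromRel_adj]
      exact ⟨hxW, Or.inl (hkey x)⟩
  haveI : Nonempty ((genericBiCM T).neighborSet v : Set _) := ⟨W⟩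
  exact ⟨fun x y => (hreach x).trans (hreach y).symm⟩
end
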